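/- arXiv:1406.1570 — 3 statements merged into one kernel-verified Lean document; each statement's English description precedes it below -/
import Mathlib

section
/- Let F : ℝ → ℝ be continuous, G an antiderivative of F, and K an antiderivative of e^{−G}. Let α : ℝ² → ℝ be a C² function satisfying Δα = F(α)·|∇α|², where Δ is the Laplacian and |∇α|² = α_x² + α_y². Then f := K ∘ α is harmonic, i.e., Δf = 0. -/
/-- Partial derivative in the first variable. -/
noncomputable def pdx (α : ℝ → ℝ → ℝ) (x y : ℝ) : ℝ := deriv (fun s => α s y) x

/-- Partial derivative in the second variable. -/
noncomputable def pdy (α : ℝ → ℝ → ℝ) (x y : ℝ) : ℝ := deriv (fun s => α x s) y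

/-- Laplacian. -/
noncomputable def lap (α : ℝ → ℝ → ℝ) (x y : ℝ) : ℝ :=
  pdx (pdx α) x y + pdy (pdy α) x y

theorem stmt_4 (F G K : ℝ → ℝ) (hF : Continuous F)
    (hG : ∀ t, HasDerivAt G (F t) t)
    (hK : ∀ t, HasDerivAt K (Real.exp (-G t)) t)
    (α : ℝ → ℝ → ℝ) (hα : ContDiff ℝ 2 (fun p : ℝ × ℝ => α p.1 p.2))
    (hpde : ∀ x y, lap α x y = F (α x y) * (pdx α x y ^ 2 + pdy α x y ^ 2)) :
    ∀ x y, lap (fun x y => K (α x y)) x y = 0 := by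
  set A : ℝ × ℝ → ℝ := fun p => α p.1 p.2 with hA
  have hA1 : Differentiable ℝ A := hα.differentiable (by norm_num)
  have hfd : ContDiff ℝ 1 (fderiv ℝ A) := hα.fderiv_right (by norm_num)
  -- slices have derivatives given by the fderiv applied to basis vectors
  have hslx : ∀ s y : ℝ, HasDerivAt (fun t => α t y) ((fderiv ℝ A (s, y)) (1, 0)) s := by
    intro s y
    have hc : HasDerivAt (fun t : ℝ => (t, y)) ((1 : ℝ), (0 : ℝ)) s :=
      (hasDerivAt_id s).prodMk (hasDerivAt_const s y)
    exact ((hA1 (s, y)).hasFDerivAt.comp_hasDerivAt s hc)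
  have hsly : ∀ x s : ℝ, HasDerivAt (fun t => α x t) ((fderiv ℝ A (x, s)) (0, 1)) s := by
    intro x s
    have hc : HasDerivAt (fun t : ℝ => (x, t)) ((0 : ℝ), (1 : ℝ)) s :=
      (hasDerivAt_const s x).prodMk (hasDerivAt_id s)
    exact ((hA1 (x, s)).hasFDerivAt.comp_hasDerivAt s hc)
  have hpdx : ∀ s y : ℝ, pdx α s y = (fderiv ℝ A (s, y)) (1, 0) := fun s y => (hslx s y).deriv
  have hpdy : ∀ x s : ℝ, pdy α x s = (fderiv ℝ A (x, s)) (0, 1) := fun x s => (hsly x s).deriv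
  have hdx : ∀ s y : ℝ, HasDerivAt (fun t => α t y) (pdx α s y) s := by
    intro s y; rw [hpdx]; exact hslx s y
  have hdy : ∀ x s : ℝ, HasDerivAt (fun t => α x t) (pdy α x s) s := by
    intro x s; rw [hpdy]; exact hsly x s
  -- differentiability of the first partials
  have hux : ∀ y : ℝ, Differentiable ℝ (fun s => pdx α s y) := by
    intro y
    have : (fun s => pdx α s y) = fun s => (fderiv ℝ A (s, y)) (1, 0) := funext fun s => hpdx s y
    rw [this]
    exact (((hfd.differentiable one_ne_zero).comp
      (differentiable_id.prodMk (differentiable_const y)))).clm_apply (differentiable_const _)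
  have huy : ∀ x : ℝ, Differentiable ℝ (fun s => pdy α x s) := by
    intro x
    have : (fun s => pdy α x s) = fun s => (fderiv ℝ A (x, s)) (0, 1) := funext fun s => hpdy x s
    rw [this]
    exact (((hfd.differentiable one_ne_zero).comp
      ((differentiable_const x).prodMk differentiable_id))).clm_apply (differentiable_const _)
  have hPdx2 : ∀ x y : ℝ, HasDerivAt (fun s => pdx α s y) (pdx (pdx α) x y) x := by
    intro x y
    exact ((hux y x).hasDerivAt : HasDerivAt _ (deriv (fun s => pdx α s y) x) x)
  have hPdy2 : ∀ x y : ℝ, HasDerivAt (fun s => pdy α x s) (pdy (pdy α) x y) y := by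
    intro x y
    exact ((huy x y).hasDerivAt : HasDerivAt _ (deriv (fun s => pdy α x s) y) y)
  intro x y
  -- first partials of K ∘ α
  have hKx : ∀ s : ℝ, HasDerivAt (fun t => K (α t y))
      (Real.exp (-G (α s y)) * pdx α s y) s := fun s => (hK (α s y)).comp s (hdx s y)
  have hKy : ∀ s : ℝ, HasDerivAt (fun t => K (α x t))
      (Real.exp (-G (α x s)) * pdy α x s) s := fun s => (hK (α x s)).comp s (hdy x s)
  -- derivative of the exponential factor
  have hEx : HasDerivAt (fun t => Real.exp (-G (α t y)))
      (Real.exp (-G (α x y)) * (-(F (α x y) * pdx α x y))) x :=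
    (((hG (α x y)).comp x (hdx x y)).neg).exp
  have hEy : HasDerivAt (fun t => Real.exp (-G (α x t)))
      (Real.exp (-G (α x y)) * (-(F (α x y) * pdy α x y))) y :=
    (((hG (α x y)).comp y (hdy x y)).neg).exp
  -- second partials of K ∘ α
  have e1 : (fun s => pdx (fun a b => K (α a b)) s y)
      = fun s => Real.exp (-G (α s y)) * pdx α s y := funext fun s => (hKx s).deriv
  have e2 : (fun s => pdy (fun a b => K (α a b)) x s)
      = fun s => Real.exp (-G (α x s)) * pdy α x s := funext fun s => (hKy s).deriv
  have h2x : pdx (pdx (fun a b => K (α a b))) x y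
      = Real.exp (-G (α x y)) * (-(F (α x y) * pdx α x y)) * pdx α x y
        + Real.exp (-G (α x y)) * pdx (pdx α) x y := by
    show deriv (fun s => pdx (fun a b => K (α a b)) s y) x = _
    rw [e1]
    exact (hEx.mul (hPdx2 x y)).deriv
  have h2y : pdy (pdy (fun a b => K (α a b))) x y
      = Real.exp (-G (α x y)) * (-(F (α x y) * pdy α x y)) * pdy α x y
        + Real.exp (-G (α x y)) * pdy (pdy α) x y := by
    show deriv (fun s => pdy (fun a b => K (α a b)) x s) y = _
    rw [e2]
    exact (hEy.mul (hPdy2 x y)).deriv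
  have hpde' := hpde x y
  unfold lap at hpde' ⊢
  rw [h2x, h2y]
  nlinarith [hpde', Real.exp_pos (-G (α x y))]
end

section
/- Let F : ℝ → ℝ be continuous, G an antiderivative of F, and K an antiderivative of e^{−G}. Then K is strictly increasing, and its inverse function ψ = K⁻¹ (defined on the range of K) is C² and satisfies ψ''(t) = F(ψ(t))·ψ'(t)² for all t in the range of K. -/
theorem stmt_6 (F G K : ℝ → ℝ) (hF : Continuous F)
    (hG : ∀ t, HasDerivAt G (F t) t)
    (hK : ∀ t, HasDerivAt K (Real.exp (-G t)) t)
    (ψ : ℝ → ℝ) (hψK : ∀ s, ψ (K s) = s) :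
    StrictMono K ∧ ContDiffOn ℝ 2 ψ (Set.range K) ∧
      ∀ t ∈ Set.range K, deriv (deriv ψ) t = F (ψ t) * (deriv ψ t) ^ 2 := by
  have hKmono : StrictMono K :=
    strictMono_of_hasDerivAt_pos hK fun x => Real.exp_pos _
  have hKcont : Continuous K := continuous_iff_continuousAt.mpr fun x => (hK x).continuousAt
  have hGcont : Continuous G := continuous_iff_continuousAt.mpr fun x => (hG x).continuousAt
  -- range K is open
  have hopen : IsOpen (Set.range K) := by
    rw [isOpen_iff_mem_nhds]
    rintro t ⟨s, rfl⟩
    have h1 : K (s - 1) < K s := hKmono (by linarith)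
    have h2 : K s < K (s + 1) := hKmono (by linarith)
    have hsub : Set.Icc (K (s - 1)) (K (s + 1)) ⊆ K '' Set.Icc (s - 1) (s + 1) :=
      intermediate_value_Icc (by linarith) hKcont.continuousOn
    have : Set.Ioo (K (s - 1)) (K (s + 1)) ⊆ Set.range K := fun y hy => by
      obtain ⟨x, _, hx⟩ := hsub ⟨le_of_lt hy.1, le_of_lt hy.2⟩
      exact ⟨x, hx⟩
    exact Filter.mem_of_superset (Ioo_mem_nhds h1 h2) this
  -- ψ is strictly monotone on range K
  have hψmono : StrictMonoOn ψ (Set.range K) := by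
    rintro x ⟨a, rfl⟩ y ⟨b, rfl⟩ hxy
    rw [hψK, hψK]
    exact hKmono.lt_iff_lt.mp hxy
  -- ψ is continuous at every point of range K
  have hψcont : ∀ t ∈ Set.range K, ContinuousAt ψ t := by
    intro t ht
    refine hψmono.continuousAt_of_image_mem_nhds (hopen.mem_nhds ht) ?_
    have : ψ '' Set.range K = Set.univ := by
      ext s; simp only [Set.mem_image, Set.mem_univ, iff_true]
      exact ⟨K s, ⟨s, rfl⟩, hψK s⟩
    rw [this]; exact Filter.univ_mem
  -- derivative of ψ
  have hψderiv : ∀ t ∈ Set.range K, HasDerivAt ψ (Real.exp (G (ψ t))) t := by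
    rintro t ⟨s, rfl⟩
    have hKψ : ∀ᶠ y in nhds (K s) , K (ψ y) = y := by
      filter_upwards [hopen.mem_nhds ⟨s, rfl⟩]
      rintro y ⟨a, rfl⟩; rw [hψK]
    have h := HasDerivAt.of_local_left_inverse (hψcont _ ⟨s, rfl⟩)
      (by rw [hψK]; exact hK s) (ne_of_gt (Real.exp_pos _)) hKψ
    rw [hψK]
    rwa [← Real.exp_neg, neg_neg] at h
  set h : ℝ → ℝ := fun t => Real.exp (G (ψ t)) with hh
  -- deriv ψ = h on range K
  have hderiv_eq : ∀ t ∈ Set.range K, deriv ψ t = h t := fun t ht =>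
    (hψderiv t ht).deriv
  -- h has derivative F (ψ t) * (h t)^2 at points of range K
  have hhderiv : ∀ t ∈ Set.range K, HasDerivAt h (F (ψ t) * (h t) ^ 2) t := by
    intro t ht
    have h1 : HasDerivAt (fun u => Real.exp (G u)) (Real.exp (G (ψ t)) * F (ψ t)) (ψ t) :=
      (Real.hasDerivAt_exp (G (ψ t))).comp (ψ t) (hG (ψ t))
    have h2 := h1.comp t (hψderiv t ht)
    exact h2.congr_deriv (by simp only [hh]; ring)
  -- continuity of ψ and h on range K
  have hψcontOn : ContinuousOn ψ (Set.range K) := fun t ht =>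
    (hψcont t ht).continuousWithinAt
  have hhcontOn : ContinuousOn h (Set.range K) :=
    (Real.continuous_exp.comp hGcont).comp_continuousOn hψcontOn
  -- deriv h = F (ψ t) * h t ^ 2 on range K
  have hderiv_h : ∀ t ∈ Set.range K, deriv h t = F (ψ t) * (h t) ^ 2 := fun t ht =>
    (hhderiv t ht).deriv
  refine ⟨hKmono, ?_, ?_⟩
  · -- ContDiffOn 2
    rw [show (2 : WithTop ℕ∞) = 1 + 1 from rfl, contDiffOn_succ_iff_deriv_of_isOpen hopen]
    refine ⟨fun t ht => ((hψderiv t ht).differentiableAt).differentiableWithinAt,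
      by simp, ?_⟩
    have hcongr : ContDiffOn ℝ 1 h (Set.range K) := by
      rw [show (1 : WithTop ℕ∞) = 0 + 1 from rfl, contDiffOn_succ_iff_deriv_of_isOpen hopen]
      refine ⟨fun t ht => ((hhderiv t ht).differentiableAt).differentiableWithinAt,
        by simp, ?_⟩
      rw [contDiffOn_zero]
      have : ContinuousOn (fun t => F (ψ t) * (h t) ^ 2) (Set.range K) :=
        ((hF.comp_continuousOn hψcontOn).mul (hhcontOn.pow 2))
      exact this.congr hderiv_h
    exact hcongr.congr hderiv_eq
  · -- the ODE
    intro t ht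
    have heq : deriv ψ =ᶠ[nhds t] h := by
      filter_upwards [hopen.mem_nhds ht] with y hy using hderiv_eq y hy
    rw [Filter.EventuallyEq.deriv_eq heq, hderiv_h t ht, hderiv_eq t ht]
end

section
/- Let c₁ > 9/8 be a real number and t a real number with 1/c₁ < sin²t < 8/9. Define a(t) = (−4 + (9+4c₁)sin²t − 9c₁sin⁴t + i√(2(8−9sin²t)(−1+c₁sin²t))) / (4(−1+c₁sin²t) − i√(2(8−9sin²t)(−1+c₁sin²t))). Then |a(t)|² + (−3/2)(−2 + 3sin²t) = (c₁/(2(−9+8c₁)))·(8−9sin²t)². -/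
open Complex

lemma aux_normSq (x y : ℝ) :
    Complex.normSq ((x:ℂ) + Complex.I * (y:ℝ)) = x ^ 2 + y ^ 2 := by
  simp [Complex.normSq_apply]
  ring

lemma aux_normSq' (x y : ℝ) :
    Complex.normSq ((x:ℂ) - Complex.I * (y:ℝ)) = x ^ 2 + y ^ 2 := by
  simp [Complex.normSq_apply]
  ring

theorem stmt_8 (c₁ t : ℝ) (hc : c₁ > 9 / 8)
    (h1 : 1 / c₁ < Real.sin t ^ 2) (h2 : Real.sin t ^ 2 < 8 / 9)
    (a : ℂ)
    (ha : a = ((-4 + (9 + 4 * c₁) * Real.sin t ^ 2 - 9 * c₁ * Real.sin t ^ 4 : ℝ) +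
        Complex.I * (Real.sqrt (2 * (8 - 9 * Real.sin t ^ 2) * (-1 + c₁ * Real.sin t ^ 2)) : ℝ)) /
      ((4 * (-1 + c₁ * Real.sin t ^ 2) : ℝ) -
        Complex.I * (Real.sqrt (2 * (8 - 9 * Real.sin t ^ 2) * (-1 + c₁ * Real.sin t ^ 2)) : ℝ))) :
    ‖a‖ ^ 2 + (-3 / 2) * (-2 + 3 * Real.sin t ^ 2) =
      c₁ / (2 * (-9 + 8 * c₁)) * (8 - 9 * Real.sin t ^ 2) ^ 2 := by
  have hc0 : (0:ℝ) < c₁ := by linarith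
  set s : ℝ := Real.sin t ^ 2 with hs
  have hs4 : Real.sin t ^ 4 = s ^ 2 := by rw [hs]; ring
  have hu : 0 < -1 + c₁ * s := by
    have := (div_lt_iff₀ hc0).mp h1
    linarith
  have hv : 0 < 8 - 9 * s := by linarith
  have hq : 0 ≤ 2 * (8 - 9 * s) * (-1 + c₁ * s) := by positivity
  set y : ℝ := Real.sqrt (2 * (8 - 9 * s) * (-1 + c₁ * s)) with hy
  have hy2 : y ^ 2 = 2 * (8 - 9 * s) * (-1 + c₁ * s) := Real.sq_sqrt hq
  have hs0 : 0 < s := by nlinarith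
  have hnorm : ‖a‖ ^ 2 = Complex.normSq a := by
    rw [Complex.sq_norm]
  rw [hnorm, ha, hs4, Complex.normSq_div, aux_normSq, aux_normSq', hy2]
  have hden : (4 * (-1 + c₁ * s)) ^ 2 + 2 * (8 - 9 * s) * (-1 + c₁ * s) ≠ 0 := by
    have := mul_pos hv hu
    nlinarith [sq_nonneg (4 * (-1 + c₁ * s))]
  have hden2 : 2 * (-9 + 8 * c₁) ≠ 0 := by nlinarith
  have hden3 : -9 + c₁ * 8 ≠ 0 := by nlinarith
  field_simp
  nlinarith [sq_nonneg s, sq_nonneg (s*c₁), hy2, mul_pos hu hv]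
end
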